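/- Let h ∈ ℕ, let F be an h-flipclass of 𝔖_n, and let e = |E(F)|. Then there exists an h-flipclass F′ of 𝔖_e that is isomorphic to F. In particular, if F is irreducible, then e ≤ h+1 and F is isomorphic to an h-flipclass of 𝔖_{h+1}. -/

import Mathlib

open MvPolynomial

/-- The symmetric group `𝔖ₙ`, realized as permutations of `Fin n`. -/
abbrev Pm (n : ℕ) := Equiv.Perm (Fin n)

/-- The Coxeter length of a permutation: its number of inversions. -/
def len {n : ℕ} (w : Pm n) : ℕ :=
  (Finset.univ.filter fun q : Fin n × Fin n => q.1 < q.2 ∧ w q.2 < w q.1).card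

/-- Edges of the Bruhat graph `B(𝔖ₙ)`: `a → b` iff `b * a⁻¹` is a transposition and
`ℓ(a) < ℓ(b)`.  The label of the edge is `b * a⁻¹`. -/
def BEdge {n : ℕ} (a b : Pm n) : Prop :=
  (b * a⁻¹).IsSwap ∧ len a < len b

/-- Bruhat order: `u ≤ v` iff there is a directed path from `u` to `v` in the Bruhat graph. -/
def bruhatLE {n : ℕ} : Pm n → Pm n → Prop := Relation.ReflTransGen BEdge

/-- Strict Bruhat order. -/
def bruhatLT {n : ℕ} (a b : Pm n) : Prop := bruhatLE a b ∧ a ≠ b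

/-- Covering relation of Bruhat order. -/
def bruhatCov {n : ℕ} (a b : Pm n) : Prop :=
  bruhatLT a b ∧ ∀ z, bruhatLT a z → bruhatLT z b → False

/-- A path of length `h` from `u` to `v` in the Bruhat graph, encoded as a function
`ℕ → 𝔖ₙ` normalized to be constantly `v` from time `h` on. -/
def IsPath (n h : ℕ) (u v : Pm n) (p : ℕ → Pm n) : Prop :=
  p 0 = u ∧ (∀ j, h ≤ j → p j = v) ∧ ∀ i, i < h → BEdge (p i) (p (i + 1))

/-- The `i`-th label (`0 ≤ i ≤ h-1`) of a path. -/
def lab {n : ℕ} (p : ℕ → Pm n) (i : ℕ) : Pm n := p (i + 1) * (p i)⁻¹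

/-- `q` is obtained from `p` by the `i`-th flip (`1 ≤ i ≤ h-1`): they differ exactly at
position `i`. -/
def FlipAt {n : ℕ} (h i : ℕ) (p q : ℕ → Pm n) : Prop :=
  0 < i ∧ i < h ∧ p i ≠ q i ∧ ∀ j, j ≠ i → p j = q j

/-- One application of a flip operator on paths of length `h` from `u` to `v`. -/
def FlipStep (n h : ℕ) (u v : Pm n) (p q : ℕ → Pm n) : Prop :=
  IsPath n h u v p ∧ IsPath n h u v q ∧ ∃ i, FlipAt h i p q

/-- `F` is an `h`-flipclass of paths from `u` to `v`: an orbit of the group generated by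
the flip operators, i.e. a connected component under single flips. -/
def IsFlipclass (n h : ℕ) (u v : Pm n) (F : Set (ℕ → Pm n)) : Prop :=
  ∃ p, IsPath n h u v p ∧ F = {q | Relation.ReflTransGen (FlipStep n h u v) p q}

/-- Vertex set of the support graph `S_F`. -/
def SV (n h : ℕ) (F : Set (ℕ → Pm n)) : Set (Pm n) :=
  {a | ∃ p ∈ F, ∃ i, i ≤ h ∧ p i = a}

/-- Edge relation of the support graph `S_F` (labels are determined: `b * a⁻¹`). -/
def SE (n h : ℕ) (F : Set (ℕ → Pm n)) (a b : Pm n) : Prop :=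
  ∃ p ∈ F, ∃ i, i < h ∧ p i = a ∧ p (i + 1) = b

/-- Vertex set of the time-support graph `TS_F`. -/
def TSV (n h : ℕ) (F : Set (ℕ → Pm n)) : Set (Pm n × ℕ) :=
  {x | x.2 ≤ h ∧ ∃ p ∈ F, p x.2 = x.1}

/-- Edge relation of the time-support graph `TS_F`. -/
def TSE (n h : ℕ) (F : Set (ℕ → Pm n)) (x y : Pm n × ℕ) : Prop :=
  x.2 < h ∧ y.2 = x.2 + 1 ∧ ∃ p ∈ F, p x.2 = x.1 ∧ p (x.2 + 1) = y.1

/-- In-degree of a vertex of `TS_F`. -/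
noncomputable def indeg (n h : ℕ) (F : Set (ℕ → Pm n)) (x : Pm n × ℕ) : ℕ :=
  Set.ncard {w | TSE n h F w x}

/-- Out-degree of a vertex of `TS_F`. -/
noncomputable def outdeg (n h : ℕ) (F : Set (ℕ → Pm n)) (x : Pm n × ℕ) : ℕ :=
  Set.ncard {w | TSE n h F x w}

/-- The `t`-vector of `F`: `tᵢ` is the number of vertices of `TS_F` at time `i`. -/
noncomputable def tvec (n h : ℕ) (F : Set (ℕ → Pm n)) (i : ℕ) : ℕ :=
  Set.ncard {a : Pm n | (a, i) ∈ TSV n h F}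

lemma TSV_finite (n h : ℕ) (F : Set (ℕ → Pm n)) : (TSV n h F).Finite :=
  Set.Finite.subset (Set.finite_univ.prod (Set.finite_Iic h))
    (fun _ hx => Set.mem_prod.mpr ⟨Set.mem_univ _, hx.1⟩)

/-- The `ι`-polynomial of `F`:
`ι_F(x,y,t) = Σ_{(a,i) ∈ V(TS_F)} x^indeg(a,i) y^outdeg(a,i) t^i`
(the variables `x, y, t` are `X 0, X 1, X 2`). -/
noncomputable def iota (n h : ℕ) (F : Set (ℕ → Pm n)) : MvPolynomial (Fin 3) ℤ :=
  ∑ x ∈ (TSV_finite n h F).toFinset,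
    X 0 ^ indeg n h F x * X 1 ^ outdeg n h F x * X 2 ^ x.2

/-- A reflection ordering on the transpositions of `𝔖ₙ`: a total order `⪯` on the set of
transpositions such that for all `a < b < c`, either
`(a,b) ⪯ (a,c) ⪯ (b,c)` or `(b,c) ⪯ (a,c) ⪯ (a,b)`. -/
structure ReflOrder (n : ℕ) where
  le : Pm n → Pm n → Prop
  le_refl : ∀ t : Pm n, t.IsSwap → le t t
  le_antisymm : ∀ s t : Pm n, s.IsSwap → t.IsSwap → le s t → le t s → s = t
  le_trans : ∀ r s t : Pm n, r.IsSwap → s.IsSwap → t.IsSwap → le r s → le s t → le r t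
  le_total : ∀ s t : Pm n, s.IsSwap → t.IsSwap → le s t ∨ le t s
  reflection_cond : ∀ a b c : Fin n, a < b → b < c →
    (le (Equiv.swap a b) (Equiv.swap a c) ∧ le (Equiv.swap a c) (Equiv.swap b c)) ∨
    (le (Equiv.swap b c) (Equiv.swap a c) ∧ le (Equiv.swap a c) (Equiv.swap a b))

/-- A path (of length `h`) is increasing w.r.t. an order `le` on transpositions if its
sequence of labels is weakly increasing. -/
def IncreasingRel {n : ℕ} (h : ℕ) (le : Pm n → Pm n → Prop) (p : ℕ → Pm n) : Prop :=
  ∀ i, i + 1 < h → le (lab p i) (lab p (i + 1))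

/-- The number of increasing paths (w.r.t. a reflection ordering) in `F`. -/
noncomputable def cnt (n h : ℕ) (F : Set (ℕ → Pm n)) (ord : ReflOrder n) : ℕ :=
  Set.ncard {p ∈ F | IncreasingRel h ord.le p}

/-- Lexicographic comparison of the label sequences of two paths of length `h`. -/
def LabelLexLe {n : ℕ} (h : ℕ) (le : Pm n → Pm n → Prop) (p q : ℕ → Pm n) : Prop :=
  (∀ i, i < h → lab p i = lab q i) ∨
  ∃ i, i < h ∧ (∀ j, j < i → lab p j = lab q j) ∧ lab p i ≠ lab q i ∧ le (lab p i) (lab q i)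

/-- A path of length `h` from `(u,0)` to `(v,h)` in the time-support graph `TS_F`,
encoded by its sequence of permutation components. -/
def IsTSPath (n h : ℕ) (F : Set (ℕ → Pm n)) (u v : Pm n) (y : ℕ → Pm n) : Prop :=
  y 0 = u ∧ (∀ j, h ≤ j → y j = v) ∧ ∀ i, i < h → TSE n h F (y i, i) (y (i + 1), i + 1)

/-- The set of labels of the paths of `F`. -/
def labelSet (n h : ℕ) (F : Set (ℕ → Pm n)) : Set (Pm n) :=
  {t | ∃ p ∈ F, ∃ i, i < h ∧ lab p i = t}

/-- Lexicographic order on the transpositions of `𝔖ₙ`: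
`(a,b) ⪯ (c,d)` (with `a<b`, `c<d`) iff `a < c`, or `a = c` and `b ≤ d`. -/
def lexLe (n : ℕ) (s t : Pm n) : Prop :=
  ∃ a b c d : Fin n, a < b ∧ c < d ∧ s = Equiv.swap a b ∧ t = Equiv.swap c d ∧
    (a < c ∨ (a = c ∧ b ≤ d))

/-- Isomorphism of flipclasses: a pair `(f, g)` where `f` is a flips-preserving bijection
on the underlying permutations (inducing a bijection of the path sets), and `g` is a
label-matching bijection of the label sets that is order preserving w.r.t. the
lexicographic orders. -/
def FlipclassIso (n m h : ℕ) (F : Set (ℕ → Pm n)) (F' : Set (ℕ → Pm m)) : Prop :=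
  ∃ f : Pm n → Pm m, ∃ g : Pm n → Pm m,
    Set.BijOn f (SV n h F) (SV m h F') ∧
    Set.BijOn (fun p => f ∘ p) F F' ∧
    (∀ p ∈ F, ∀ q ∈ F, ∀ i, FlipAt h i p q → FlipAt h i (f ∘ p) (f ∘ q)) ∧
    Set.BijOn g (labelSet n h F) (labelSet m h F') ∧
    (∀ p ∈ F, ∀ i, i < h → g (lab p i) = lab (f ∘ p) i) ∧
    (∀ s t, s ∈ labelSet n h F → t ∈ labelSet n h F → lexLe n s t → lexLe m (g s) (g t))

/-- `G(Γ)` is connected: any two letters moved by some label of the path `p` are joined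
by a chain of labels. -/
def IrredPath (n k : ℕ) (p : ℕ → Pm n) : Prop :=
  ∀ a b : Fin n, (∃ i, i < k ∧ lab p i a ≠ a) → (∃ i, i < k ∧ lab p i b ≠ b) →
    Relation.ReflTransGen (fun x y => ∃ i, i < k ∧ lab p i = Equiv.swap x y) a b

/-- The set of positions of the values in `E` in the one-line notation of `w`,
i.e. `w⁻¹(E)`. -/
def posSet {n : ℕ} (w : Pm n) (E : Finset (Fin n)) : Finset (Fin n) := E.image ⇑w.symm

lemma mem_posSet {n : ℕ} {w : Pm n} {E : Finset (Fin n)} {x : Fin n} :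
    x ∈ posSet w E ↔ w x ∈ E := by
  constructor
  · intro hx
    rcases Finset.mem_image.mp hx with ⟨y, hy, rfl⟩
    simpa using hy
  · intro hx
    exact Finset.mem_image.mpr ⟨w x, hx, by simp⟩

lemma posSet_card {n : ℕ} (w : Pm n) (E : Finset (Fin n)) : (posSet w E).card = E.card :=
  Finset.card_image_of_injective _ w.symm.injective

/-- The "pattern" map `r_E : 𝔖ₙ → 𝔖ₘ` (`|E| = m`): delete from the one-line notation of
`w` the values not in `E`, and renumber the values in `E` via the order preserving
bijection `E → [m]`. -/
noncomputable def rE (n m : ℕ) (E : Finset (Fin n)) (hm : E.card = m) (w : Pm n) : Pm m :=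
  (((posSet w E).orderIsoOfFin (by rw [posSet_card, hm])).toEquiv.trans
    (⟨fun x => ⟨w x.1, mem_posSet.mp x.2⟩,
      fun y => ⟨w.symm y.1, mem_posSet.mpr (by simp [y.2])⟩,
      fun x => Subtype.ext (by simp),
      fun y => Subtype.ext (by simp)⟩ :
        {x // x ∈ posSet w E} ≃ {y // y ∈ E})).trans (E.orderIsoOfFin hm).toEquiv.symm

/-- `r_E` applied to each vertex of a path. -/
noncomputable def rEPath (n m : ℕ) (E : Finset (Fin n)) (hm : E.card = m)
    (p : ℕ → Pm n) : ℕ → Pm m := fun j => rE n m E hm (p j)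

/-- The total order `⪯_{r_E}` induced on the transpositions of `𝔖ₘ` by a reflection
ordering of `𝔖ₙ` via the order preserving bijection `r_E⁻¹ : [m] → E`. -/
def inducedOrd (n m : ℕ) (ord : ReflOrder n) (E : Finset (Fin n)) (hm : E.card = m) :
    Pm m → Pm m → Prop := fun s t =>
  ∃ a b c d : Fin m, a < b ∧ c < d ∧ s = Equiv.swap a b ∧ t = Equiv.swap c d ∧
    ord.le (Equiv.swap (↑(E.orderIsoOfFin hm a)) (↑(E.orderIsoOfFin hm b)))
           (Equiv.swap (↑(E.orderIsoOfFin hm c)) (↑(E.orderIsoOfFin hm d)))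

/-- Isomorphism of (unlabelled, or labelled with determined labels) directed graphs. -/
def GraphIso {α β : Type*} (V1 : Set α) (E1 : α → α → Prop)
    (V2 : Set β) (E2 : β → β → Prop) : Prop :=
  ∃ φ : α → β, Set.BijOn φ V1 V2 ∧ ∀ x ∈ V1, ∀ y ∈ V1, (E1 x y ↔ E2 (φ x) (φ y))

/-- Vertices of the `k`-crown: `u`, `a₁,…,a_k`, `b₁,…,b_k`, `v`. -/
def CrownV (k : ℕ) : Type := (Unit ⊕ Fin k) ⊕ (Fin k ⊕ Unit)

/-- Edges of the `k`-crown: `u → aᵢ`, `aᵢ → bᵢ`, `a_{i+1} → bᵢ` (indices mod `k`),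
`bᵢ → v`. -/
def crownEdge (k : ℕ) : CrownV k → CrownV k → Prop
  | Sum.inl (Sum.inl _), Sum.inl (Sum.inr _) => True
  | Sum.inl (Sum.inr i), Sum.inr (Sum.inl j) => i.val = j.val ∨ i.val = (j.val + 1) % k
  | Sum.inr (Sum.inl _), Sum.inr (Sum.inr _) => True
  | _, _ => False

/-- The set `W₁ · W₂` (internal direct product when supports are disjoint). -/
def dprod {n : ℕ} (W1 W2 : Subgroup (Pm n)) : Set (Pm n) :=
  {w | ∃ w1 ∈ W1, ∃ w2 ∈ W2, w = w1 * w2}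

/-- A path in the subgraph of the Bruhat graph induced on the subset `X`. -/
def IsPathIn (n : ℕ) (X : Set (Pm n)) (h : ℕ) (u v : Pm n) (p : ℕ → Pm n) : Prop :=
  IsPath n h u v p ∧ ∀ j, p j ∈ X

/-- Flip step within the induced subgraph on `X`. -/
def FlipStepIn (n : ℕ) (X : Set (Pm n)) (h : ℕ) (u v : Pm n) (p q : ℕ → Pm n) : Prop :=
  IsPathIn n X h u v p ∧ IsPathIn n X h u v q ∧ ∃ i, FlipAt h i p q

/-- Flipclass of paths in the induced subgraph on `X`. -/
def IsFlipclassIn (n : ℕ) (X : Set (Pm n)) (h : ℕ) (u v : Pm n)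
    (F : Set (ℕ → Pm n)) : Prop :=
  ∃ p, IsPathIn n X h u v p ∧ F = {q | Relation.ReflTransGen (FlipStepIn n X h u v) p q}

/-- `Δ` (a path of length `k`, normalized) is the projection (deduplication) of the
vertexwise-projected sequence `s` (defined on `0,…,hh`). -/
def IsProj (n hh k : ℕ) (s Δ : ℕ → Pm n) : Prop :=
  ∃ φ : ℕ → ℕ, Monotone φ ∧ φ 0 = 0 ∧ (∀ j, hh ≤ j → φ j = k) ∧
    (∀ j, j < hh →
      (s (j + 1) = s j ∧ φ (j + 1) = φ j) ∨ (s (j + 1) ≠ s j ∧ φ (j + 1) = φ j + 1)) ∧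
    (∀ j, j ≤ hh → s j = Δ (φ j)) ∧ ∀ j, k ≤ j → Δ j = Δ k
open Equiv Finset

-- a swap moving z swaps z with its image
lemma isSwap_eq_swap_of_ne {n : ℕ} {s : Pm n} (hs : s.IsSwap) {z : Fin n} (hz : s z ≠ z) :
    s = Equiv.swap z (s z) := by
  obtain ⟨x, y, hxy, rfl⟩ := hs
  rcases eq_or_ne z x with rfl | hzx
  · rw [Equiv.swap_apply_left, Equiv.swap_comm]
  rcases eq_or_ne z y with rfl | hzy
  · rw [Equiv.swap_apply_right]; exact Equiv.swap_comm x z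
  · exact absurd (Equiv.swap_apply_of_ne_of_ne hzx hzy) hz

-- S2: support stability
lemma supp_stable {n : ℕ} {s t : Pm n} (hs : s.IsSwap) (ht : t.IsSwap)
    (hne : t * s ≠ 1) {z : Fin n} (hz : (t * s) z = z) : s z = z ∧ t z = z := by
  by_cases h : s z = z
  · refine ⟨h, ?_⟩
    have : t (s z) = z := hz
    rwa [h] at this
  · exfalso
    have hsz : s = Equiv.swap z (s z) := isSwap_eq_swap_of_ne hs h
    have htx : t (s z) = z := hz
    have htne : t (s z) ≠ s z := by rw [htx]; exact fun e => h e.symm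
    have ht2 : t = Equiv.swap (s z) z := by
      have := isSwap_eq_swap_of_ne ht htne
      rwa [htx] at this
    apply hne
    rw [ht2, hsz, Equiv.swap_comm]
    simp [Equiv.swap_mul_self]

lemma len_eq_card_vinv {n : ℕ} (w : Pm n) :
    len w = (univ.filter fun q : Fin n × Fin n => q.1 < q.2 ∧ w⁻¹ q.2 < w⁻¹ q.1).card := by
  unfold len
  refine Finset.card_nbij' (fun q => (w q.2, w q.1)) (fun q => (w⁻¹ q.2, w⁻¹ q.1)) ?_ ?_ ?_ ?_ <;>
    intro q hq <;> simp only [Finset.mem_coe, mem_filter, mem_univ, true_and, Equiv.Perm.inv_def] at hq ⊢ <;> simp [hq.1, hq.2]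

lemma len_lt_swap_mul {n : ℕ} (w : Pm n) (a b : Fin n) (hab : a < b)
    (hw : w⁻¹ a < w⁻¹ b) : len w < len (Equiv.swap a b * w) := by
  classical
  set t := Equiv.swap a b with ht
  have htinv : (t * w)⁻¹ = w⁻¹ * t := by
    rw [mul_inv_rev, ht, Equiv.swap_inv]
  set P : Finset (Fin n × Fin n) := univ.filter fun q => q.1 < q.2 with hP
  have habne : a ≠ b := ne_of_lt hab
  -- split lemma
  have split : ∀ g : Fin n × Fin n → Prop, ∀ _ : DecidablePred g,
      (P.filter g).card =
        (P.filter fun q => t q.1 < t q.2 ∧ g q).card +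
        (P.filter fun q => t q.2 < t q.1 ∧ g q).card := by
    intro g _
    rw [← Finset.card_filter_add_card_filter_not (s := P.filter g)
      (fun q => t q.1 < t q.2)]
    congr 1
    · rw [Finset.filter_filter]
      apply congrArg Finset.card
      apply Finset.filter_congr
      intro q hq; simp only [hP, mem_filter, mem_univ, true_and] at hq
      constructor
      · rintro ⟨h1, h2⟩; exact ⟨h2, h1⟩
      · rintro ⟨h1, h2⟩; exact ⟨h2, h1⟩
    · rw [Finset.filter_filter]
      apply congrArg Finset.card
      apply Finset.filter_congr
      intro q hq; simp only [hP, mem_filter, mem_univ, true_and] at hq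
      have hne : t q.1 ≠ t q.2 := fun h => absurd (t.injective h) (ne_of_lt hq)
      constructor
      · rintro ⟨h1, h2⟩; exact ⟨lt_of_le_of_ne (not_lt.mp h2) hne.symm, h1⟩
      · rintro ⟨h1, h2⟩; exact ⟨h2, not_lt.mpr (le_of_lt h1)⟩
  have ta : t a = b := Equiv.swap_apply_left a b
  have tb : t b = a := Equiv.swap_apply_right a b
  have tt : ∀ x, t (t x) = x := fun x => Equiv.swap_apply_self a b x
  have tother : ∀ x : Fin n, x ≠ a → x ≠ b → t x = x := fun x h1 h2 =>
    Equiv.swap_apply_of_ne_of_ne h1 h2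
  -- length of w, split
  have h1 : len w =
      (P.filter fun q => t q.1 < t q.2 ∧ w⁻¹ q.2 < w⁻¹ q.1).card +
      (P.filter fun q => t q.2 < t q.1 ∧ w⁻¹ q.2 < w⁻¹ q.1).card := by
    rw [len_eq_card_vinv, ← Finset.filter_filter]
    exact split _ _
  have h2 : len (t * w) =
      (P.filter fun q => t q.1 < t q.2 ∧ w⁻¹ (t q.2) < w⁻¹ (t q.1)).card +
      (P.filter fun q => t q.2 < t q.1 ∧ w⁻¹ (t q.2) < w⁻¹ (t q.1)).card := by
    rw [len_eq_card_vinv]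
    have : ∀ x, (t * w)⁻¹ x = w⁻¹ (t x) := fun x => by rw [htinv]; rfl
    simp only [this]
    rw [← Finset.filter_filter]
    exact split _ _
  have bij1 : (P.filter fun q => t q.1 < t q.2 ∧ w⁻¹ (t q.2) < w⁻¹ (t q.1)).card =
      (P.filter fun q => t q.1 < t q.2 ∧ w⁻¹ q.2 < w⁻¹ q.1).card := by
    refine Finset.card_nbij' (fun q => (t q.1, t q.2)) (fun q => (t q.1, t q.2)) ?_ ?_ ?_ ?_ <;>
      intro q hq <;>
      simp only [Finset.mem_coe, hP, mem_filter, mem_univ, true_and, tt] at hq ⊢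
    · exact ⟨hq.2.1, hq.1, hq.2.2⟩
    · exact ⟨hq.2.1, hq.1, hq.2.2⟩
  have bij2 : (P.filter fun q => t q.2 < t q.1 ∧ w⁻¹ (t q.2) < w⁻¹ (t q.1)).card =
      (P.filter fun q => t q.2 < t q.1 ∧ ¬ (w⁻¹ q.2 < w⁻¹ q.1)).card := by
    refine Finset.card_nbij' (fun q => (t q.2, t q.1)) (fun q => (t q.2, t q.1)) ?_ ?_ ?_ ?_ <;>
      intro q hq <;>
      simp only [Finset.mem_coe, hP, mem_filter, mem_univ, true_and, tt] at hq ⊢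
    · exact ⟨hq.2.1, hq.1, not_lt.mpr (le_of_lt hq.2.2)⟩
    · refine ⟨hq.2.1, hq.1, ?_⟩
      rcases lt_or_ge (w⁻¹ q.1) (w⁻¹ q.2) with h | h
      · exact h
      · exfalso
        rcases lt_or_eq_of_le h with h' | h'
        · exact hq.2.2 h'
        · exact absurd (w⁻¹.injective h') (ne_of_lt hq.1).symm
  -- characterization of reversed pairs
  have revchar : ∀ c d : Fin n, c < d → t d < t c →
      (c = a ∧ a < d ∧ d < b) ∨ (c = a ∧ d = b) ∨ (d = b ∧ a < c ∧ c < b) := by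
    intro c d hcd hrev
    rcases eq_or_ne c a with hca | hca
    · rcases eq_or_ne d b with hdb | hdb
      · exact Or.inr (Or.inl ⟨hca, hdb⟩)
      · have hda : d ≠ a := by rw [← hca]; exact ne_of_gt hcd
        rw [hca, ta, tother d hda hdb] at hrev
        exact Or.inl ⟨hca, hca ▸ hcd, hrev⟩
    · rcases eq_or_ne c b with hcb | hcb
      · exfalso
        have hdb : d ≠ b := ne_of_gt (hcb ▸ hcd)
        have hda : d ≠ a := ne_of_gt (lt_trans hab (hcb ▸ hcd))
        rw [hcb, tb, tother d hda hdb] at hrev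
        exact absurd (lt_trans (lt_trans hab (hcb ▸ hcd)) hrev) (lt_irrefl a)
      · rw [tother c hca hcb] at hrev
        rcases eq_or_ne d b with hdb | hdb
        · rw [hdb, tb] at hrev
          exact Or.inr (Or.inr ⟨hdb, hrev, hdb ▸ hcd⟩)
        · exfalso
          rcases eq_or_ne d a with hda | hda
          · rw [hda, ta] at hrev
            exact absurd (lt_trans hcd (lt_trans (hda ▸ hab) hrev)) (lt_irrefl c)
          · rw [tother d hda hdb] at hrev
            exact absurd (lt_trans hcd hrev) (lt_irrefl c)
  have key : (P.filter fun q => t q.2 < t q.1 ∧ w⁻¹ q.2 < w⁻¹ q.1).card <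
      (P.filter fun q => t q.2 < t q.1 ∧ ¬ (w⁻¹ q.2 < w⁻¹ q.1)).card := by
    set R1 := P.filter fun q : Fin n × Fin n => t q.2 < t q.1 ∧ w⁻¹ q.2 < w⁻¹ q.1 with hR1
    set R2 := P.filter fun q : Fin n × Fin n => t q.2 < t q.1 ∧ ¬ (w⁻¹ q.2 < w⁻¹ q.1) with hR2
    have habR2 : (a, b) ∈ R2 := by
      simp only [hR2, hP, mem_filter, mem_univ, true_and]
      exact ⟨hab, by rw [ta, tb]; exact hab, not_lt.mpr (le_of_lt hw)⟩
    have hstep : R1.card ≤ (R2.erase (a, b)).card := by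
      apply Finset.card_le_card_of_injOn (fun q => if q.1 = a then (q.2, b) else (a, q.1))
      · intro q hq
        simp only [Finset.mem_coe, hR1, hP, mem_filter, mem_univ, true_and] at hq ⊢
        obtain ⟨hq1, hq2, hq3⟩ := hq
        rcases revchar q.1 q.2 hq1 hq2 with ⟨hc, hd1, hd2⟩ | ⟨hc, hd⟩ | ⟨hd, hc1, hc2⟩
        · rw [if_pos hc]
          rw [Finset.mem_erase]
          constructor
          · intro hcon
            have : q.2 = a := congrArg Prod.fst hcon
            exact absurd (this ▸ hd1) (lt_irrefl a)
          simp only [hR2, hP, mem_filter, mem_univ, true_and]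
          refine ⟨hd2, ?_, ?_⟩
          · rw [tb, tother q.2 (ne_of_gt hd1) (ne_of_lt hd2)]
            exact hd1
          · rw [hc] at hq3
            exact not_lt.mpr (le_of_lt (lt_trans hq3 hw))
        · exfalso
          rw [hc, hd] at hq3
          exact absurd hq3 (not_lt.mpr (le_of_lt hw))
        · rw [if_neg (ne_of_gt hc1)]
          rw [Finset.mem_erase]
          constructor
          · intro hcon
            have : q.1 = b := congrArg Prod.snd hcon
            exact absurd (this ▸ hc2) (lt_irrefl b)
          simp only [hR2, hP, mem_filter, mem_univ, true_and]
          refine ⟨hc1, ?_, ?_⟩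
          · rw [ta, tother q.1 (ne_of_gt hc1) (ne_of_lt hc2)]
            exact hc2
          · rw [hd] at hq3
            exact not_lt.mpr (le_of_lt (lt_trans hw hq3))
      · intro q hq q' hq' heq
        simp only [Finset.mem_coe, hR1, hP, mem_filter, mem_univ, true_and] at hq hq'
        simp only at heq
        rcases revchar q.1 q.2 hq.1 hq.2.1 with ⟨hc, hd1, _⟩ | ⟨hc, hd⟩ | ⟨hd, hc1, _⟩ <;>
        rcases revchar q'.1 q'.2 hq'.1 hq'.2.1 with ⟨hc', hd1', _⟩ | ⟨hc', hd'⟩ | ⟨hd', hc1', _⟩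
        all_goals first
        | (exfalso
           first
           | (rw [hc, hd] at hq; exact absurd hq.2.2 (not_lt.mpr (le_of_lt hw)))
           | (rw [hc', hd'] at hq'; exact absurd hq'.2.2 (not_lt.mpr (le_of_lt hw))))
        | skip
        · rw [if_pos hc, if_pos hc'] at heq
          have h2 : q.2 = q'.2 := congrArg Prod.fst heq
          exact Prod.ext (hc.trans hc'.symm) h2
        · rw [if_pos hc, if_neg (ne_of_gt hc1')] at heq
          exfalso
          have : q.2 = a := congrArg Prod.fst heq
          exact absurd (this ▸ hd1) (lt_irrefl a)
        · rw [if_neg (ne_of_gt hc1), if_pos hc'] at heq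
          exfalso
          have : a = q'.2 := congrArg Prod.fst heq
          exact absurd (this ▸ hd1') (lt_irrefl a)
        · rw [if_neg (ne_of_gt hc1), if_neg (ne_of_gt hc1')] at heq
          have h2 : q.1 = q'.1 := congrArg Prod.snd heq
          exact Prod.ext h2 (hd.trans hd'.symm)
    calc R1.card ≤ (R2.erase (a, b)).card := hstep
      _ < R2.card := Finset.card_erase_lt_of_mem habR2
  omega

lemma len_lt_swap_iff {n : ℕ} (w : Pm n) (a b : Fin n) (hab : a < b) :
    len w < len (Equiv.swap a b * w) ↔ w⁻¹ a < w⁻¹ b := by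
  constructor
  · intro h
    by_contra hcon
    have hne : w⁻¹ a ≠ w⁻¹ b := fun h' => (ne_of_lt hab) (w⁻¹.injective h')
    have hba : w⁻¹ b < w⁻¹ a := lt_of_le_of_ne (not_lt.mp hcon) hne.symm
    have h2 : len (Equiv.swap a b * w) < len (Equiv.swap a b * (Equiv.swap a b * w)) := by
      apply len_lt_swap_mul _ a b hab
      have : (Equiv.swap a b * w)⁻¹ = w⁻¹ * Equiv.swap a b := by
        rw [mul_inv_rev, Equiv.swap_inv]
      rw [this]
      simpa [Equiv.swap_apply_left, Equiv.swap_apply_right] using hba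
    rw [← mul_assoc, Equiv.swap_mul_self, one_mul] at h2
    omega
  · exact len_lt_swap_mul w a b hab

section GraphBound
variable {n : ℕ}

def Reach (f : ℕ → Pm n) (s : Finset ℕ) : Fin n → Fin n → Prop :=
  Relation.ReflTransGen (fun x y => ∃ i ∈ s, f i = Equiv.swap x y)

lemma reach_symm (f : ℕ → Pm n) (s : Finset ℕ) {x y : Fin n} (h : Reach f s x y) :
    Reach f s y x := by
  haveI hs : Std.Symm (fun x y : Fin n => ∃ i ∈ s, f i = Equiv.swap x y) :=
    ⟨fun c d ⟨i, hi, hfi⟩ => ⟨i, hi, by rw [hfi, Equiv.swap_comm]⟩⟩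
  unfold Reach at h ⊢
  exact Std.Symm.symm _ _ h

lemma reach_trans {f : ℕ → Pm n} {s : Finset ℕ} {x y z : Fin n}
    (h1 : Reach f s x y) (h2 : Reach f s y z) : Reach f s x z :=
  Relation.ReflTransGen.trans h1 h2

lemma reach_mono {f : ℕ → Pm n} {s s' : Finset ℕ} (hss : s ⊆ s') {x y : Fin n}
    (h : Reach f s x y) : Reach f s' x y := by
  exact Relation.ReflTransGen.mono (fun c d ⟨i, hi, hfi⟩ => ⟨i, hss hi, hfi⟩) _ _ h

lemma reach_erase {f : ℕ → Pm n} {s : Finset ℕ} {i : ℕ} {x₀ y₀ : Fin n}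
    (hfi : f i = Equiv.swap x₀ y₀) {r a : Fin n} (h : Reach f s r a) :
    Reach f (s.erase i) r a ∨ Reach f (s.erase i) x₀ a ∨ Reach f (s.erase i) y₀ a := by
  induction h with
  | refl => exact Or.inl Relation.ReflTransGen.refl
  | tail _ step IH =>
    rename_i b c _
    obtain ⟨j, hj, hfj⟩ := step
    by_cases hji : j = i
    · subst hji
      rw [hfi] at hfj
      by_cases hbc : b = c
      · exact hbc ▸ IH
      · rcases eq_or_ne b x₀ with hb | hb
        · have : c = y₀ := by
            have := congrArg (fun g : Pm n => g b) hfj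
            simp only [Equiv.swap_apply_left] at this
            rw [← this, hb, Equiv.swap_apply_left]
          exact Or.inr (Or.inr (this ▸ Relation.ReflTransGen.refl))
        · rcases eq_or_ne b y₀ with hb' | hb'
          · have : c = x₀ := by
              have := congrArg (fun g : Pm n => g b) hfj
              simp only [Equiv.swap_apply_left] at this
              rw [← this, hb', Equiv.swap_apply_right]
            exact Or.inr (Or.inl (this ▸ Relation.ReflTransGen.refl))
          · exfalso
            have := congrArg (fun g : Pm n => g b) hfj
            simp only [Equiv.swap_apply_left] at this
            rw [Equiv.swap_apply_of_ne_of_ne hb hb'] at this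
            exact hbc this
    · rcases IH with h' | h' | h' <;>
        [exact Or.inl (h'.tail ⟨j, Finset.mem_erase.mpr ⟨hji, hj⟩, hfj⟩);
         exact Or.inr (Or.inl (h'.tail ⟨j, Finset.mem_erase.mpr ⟨hji, hj⟩, hfj⟩));
         exact Or.inr (Or.inr (h'.tail ⟨j, Finset.mem_erase.mpr ⟨hji, hj⟩, hfj⟩))]

lemma graph_bound (f : ℕ → Pm n) :
    ∀ (s : Finset ℕ) (roots A : Finset (Fin n)),
      (∀ a ∈ A, ∃ r ∈ roots, Reach f s r a) → A.card ≤ s.card + roots.card := by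
  intro s
  induction s using Finset.strongInduction with
  | _ s IH =>
    intro roots A hA
    by_cases hcond : ∃ i ∈ s, ∃ x₀ y₀ : Fin n, f i = Equiv.swap x₀ y₀ ∧
        ∃ r ∈ roots, Reach f s r x₀
    · obtain ⟨i, hi, x₀, y₀, hfi, r₀, hr₀, hrx⟩ := hcond
      set s' := s.erase i with hs'
      have hr₀' : Reach f s' x₀ r₀ ∨ Reach f s' y₀ r₀ := by
        rcases reach_erase hfi (reach_symm f s hrx) with h | h | h
        · exact Or.inl h
        · exact Or.inl h
        · exact Or.inr h
      set roots' := insert x₀ (insert y₀ (roots.erase r₀)) with hroots'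
      have hcov : ∀ a ∈ A, ∃ r ∈ roots', Reach f s' r a := by
        intro a ha
        obtain ⟨r, hr, hra⟩ := hA a ha
        rcases reach_erase hfi hra with h | h | h
        · rcases eq_or_ne r r₀ with hrr | hrr
          · subst hrr
            rcases hr₀' with h' | h'
            · exact ⟨x₀, Finset.mem_insert_self _ _, reach_trans h' h⟩
            · exact ⟨y₀, Finset.mem_insert.mpr (Or.inr (Finset.mem_insert_self _ _)),
                reach_trans h' h⟩
          · exact ⟨r, Finset.mem_insert.mpr (Or.inr (Finset.mem_insert.mpr
              (Or.inr (Finset.mem_erase.mpr ⟨hrr, hr⟩)))), h⟩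
        · exact ⟨x₀, Finset.mem_insert_self _ _, h⟩
        · exact ⟨y₀, Finset.mem_insert.mpr (Or.inr (Finset.mem_insert_self _ _)), h⟩
      have hIH := IH s' (Finset.erase_ssubset hi) roots' A hcov
      have hc1 : s'.card = s.card - 1 := Finset.card_erase_of_mem hi
      have hc2 : roots'.card ≤ roots.card + 1 := by
        calc roots'.card ≤ (insert y₀ (roots.erase r₀)).card + 1 := Finset.card_insert_le _ _
          _ ≤ (roots.erase r₀).card + 1 + 1 := by
              have := Finset.card_insert_le y₀ (roots.erase r₀); omega
          _ = roots.card - 1 + 2 := by rw [Finset.card_erase_of_mem hr₀]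
          _ ≤ roots.card + 1 := by
              have : 1 ≤ roots.card := Finset.card_pos.mpr ⟨r₀, hr₀⟩
              omega
      have : 1 ≤ s.card := Finset.card_pos.mpr ⟨i, hi⟩
      omega
    · push_neg at hcond
      have : A ⊆ roots := by
        intro a ha
        obtain ⟨r, hr, hra⟩ := hA a ha
        rcases Relation.ReflTransGen.cases_head hra with heq | ⟨c, hstep, _⟩
        · exact heq ▸ hr
        · exfalso
          obtain ⟨i, hi, hfi⟩ := hstep
          exact hcond i hi r c hfi r hr Relation.ReflTransGen.refl
      have := Finset.card_le_card this
      omega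

end GraphBound

section PathBasics
variable {n h : ℕ} {u v : Pm n}

lemma isPath_of_mem {F : Set (ℕ → Pm n)} (hF : IsFlipclass n h u v F) {q : ℕ → Pm n}
    (hq : q ∈ F) : IsPath n h u v q := by
  obtain ⟨p₀, hp₀, rfl⟩ := hF
  induction hq with
  | refl => exact hp₀
  | tail _ step _ => exact step.2.1

lemma lab_isSwap {p : ℕ → Pm n} (hp : IsPath n h u v p) {i : ℕ} (hi : i < h) :
    (lab p i).IsSwap := (hp.2.2 i hi).1

lemma lab_mul {p : ℕ → Pm n} (i : ℕ) : lab p i * p i = p (i + 1) := by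
  rw [lab, inv_mul_cancel_right]

lemma len_lt_path {p : ℕ → Pm n} (hp : IsPath n h u v p) {i : ℕ} (hi : i < h) :
    len (p i) < len (p (i + 1)) := (hp.2.2 i hi).2

-- the two labels around a flip position compose to the same permutation
lemma flip_labels_prod {p : ℕ → Pm n} {i₀ : ℕ} (hi₀ : 0 < i₀) :
    lab p i₀ * lab p (i₀ - 1) = p (i₀ + 1) * (p (i₀ - 1))⁻¹ := by
  have h1 : i₀ - 1 + 1 = i₀ := by omega
  rw [lab, lab, h1]
  group

lemma flipstep_moved {p q : ℕ → Pm n} (hstep : FlipStep n h u v p q) (a : Fin n) :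
    (∃ i, i < h ∧ lab p i a ≠ a) ↔ (∃ i, i < h ∧ lab q i a ≠ a) := by
  obtain ⟨hp, hq, i₀, h0, hih, hne, hagree⟩ := hstep
  have h1 : i₀ - 1 + 1 = i₀ := by omega
  have hi1h : i₀ - 1 < h := by omega
  have hπ : lab p i₀ * lab p (i₀ - 1) = lab q i₀ * lab q (i₀ - 1) := by
    rw [flip_labels_prod h0, flip_labels_prod h0,
      hagree (i₀ + 1) (by omega), hagree (i₀ - 1) (by omega)]
  have hπne : lab p i₀ * lab p (i₀ - 1) ≠ 1 := by
    rw [flip_labels_prod h0]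
    intro hcon
    have : p (i₀ + 1) = p (i₀ - 1) := by
      have := congrArg (· * p (i₀ - 1)) hcon
      simpa [mul_assoc] using this
    have l1 := len_lt_path hp hi1h
    have l2 := len_lt_path hp hih
    rw [h1] at l1
    rw [this] at l2
    omega
  have key : ∀ r : ℕ → Pm n, IsPath n h u v r → lab r i₀ * lab r (i₀ - 1) =
      lab p i₀ * lab p (i₀ - 1) →
      (((lab r (i₀ - 1)) a ≠ a ∨ (lab r i₀) a ≠ a) ↔ (lab p i₀ * lab p (i₀-1)) a ≠ a) := by
    intro r hr hprod
    constructor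
    · intro hmoved
      intro hfix
      rw [← hprod] at hfix hπne
      obtain ⟨hs, ht⟩ := supp_stable (lab_isSwap hr hi1h) (lab_isSwap hr hih) hπne hfix
      rcases hmoved with hm | hm
      · exact hm hs
      · exact hm ht
    · intro hmoved
      by_contra hcon
      push_neg at hcon
      apply hmoved
      rw [← hprod]
      show (lab r i₀) ((lab r (i₀ - 1)) a) = a
      rw [hcon.1, hcon.2]
  have hlab_eq : ∀ i, i < h → i ≠ i₀ - 1 → i ≠ i₀ → lab p i = lab q i := by
    intro i _ hne1 hne2
    rw [lab, lab, hagree i hne2, hagree (i + 1) (by omega)]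
  constructor
  · rintro ⟨i, hih', hmov⟩
    by_cases hcase : i ≠ i₀ - 1 ∧ i ≠ i₀
    · exact ⟨i, hih', by rw [← hlab_eq i hih' hcase.1 hcase.2]; exact hmov⟩
    · have hmv : (lab p i₀ * lab p (i₀-1)) a ≠ a := by
        apply (key p hp rfl).mp
        push_neg at hcase
        by_cases hi : i = i₀ - 1
        · exact Or.inl (hi ▸ hmov)
        · exact Or.inr ((hcase hi) ▸ hmov)
      rcases (key q hq hπ.symm).mpr hmv with hm | hm
      · exact ⟨i₀ - 1, hi1h, hm⟩
      · exact ⟨i₀, hih, hm⟩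
  · rintro ⟨i, hih', hmov⟩
    by_cases hcase : i ≠ i₀ - 1 ∧ i ≠ i₀
    · exact ⟨i, hih', by rw [hlab_eq i hih' hcase.1 hcase.2]; exact hmov⟩
    · have hmv : (lab p i₀ * lab p (i₀-1)) a ≠ a := by
        apply (key q hq hπ.symm).mp
        push_neg at hcase
        by_cases hi : i = i₀ - 1
        · exact Or.inl (hi ▸ hmov)
        · exact Or.inr ((hcase hi) ▸ hmov)
      rcases (key p hp rfl).mpr hmv with hm | hm
      · exact ⟨i₀ - 1, hi1h, hm⟩
      · exact ⟨i₀, hih, hm⟩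

lemma moved_eq_of_mem {F : Set (ℕ → Pm n)} (hF : IsFlipclass n h u v F)
    {p q : ℕ → Pm n} (hp : p ∈ F) (hq : q ∈ F) (a : Fin n) :
    (∃ i, i < h ∧ lab p i a ≠ a) ↔ (∃ i, i < h ∧ lab q i a ≠ a) := by
  obtain ⟨p₀, hp₀, rfl⟩ := hF
  have base : ∀ r : ℕ → Pm n, Relation.ReflTransGen (FlipStep n h u v) p₀ r →
      ((∃ i, i < h ∧ lab p₀ i a ≠ a) ↔ (∃ i, i < h ∧ lab r i a ≠ a)) := by
    intro r hr
    induction hr with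
    | refl => rfl
    | tail _ step IH => exact IH.trans (flipstep_moved step a)
  exact (base p hp).symm.trans (base q hq)

end PathBasics

lemma card_E_le {n h : ℕ} {u v : Pm n} {F : Set (ℕ → Pm n)}
    (hF : IsFlipclass n h u v F) {E : Finset (Fin n)}
    (hE : ∀ a : Fin n, a ∈ E ↔ ∃ p ∈ F, ∃ i, i < h ∧ lab p i a ≠ a)
    {Γ : ℕ → Pm n} (hΓ : Γ ∈ F) (hirr : IrredPath n h Γ) : E.card ≤ h + 1 := by
  have hEΓ : ∀ a : Fin n, a ∈ E ↔ ∃ i, i < h ∧ lab Γ i a ≠ a := by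
    intro a
    rw [hE a]
    constructor
    · rintro ⟨p, hp, hmov⟩
      exact (moved_eq_of_mem hF hp hΓ a).mp hmov
    · intro hmov
      exact ⟨Γ, hΓ, hmov⟩
  rcases Finset.eq_empty_or_nonempty E with rfl | ⟨a₀, ha₀⟩
  · simp
  · have hbound := graph_bound (lab Γ) (Finset.range h) {a₀} E ?_
    · simpa using hbound
    · intro a ha
      refine ⟨a₀, Finset.mem_singleton_self a₀, ?_⟩
      have := hirr a₀ a ((hEΓ a₀).mp ha₀) ((hEΓ a).mp ha)
      exact Relation.ReflTransGen.mono
        (fun x y ⟨i, hi, hfi⟩ => ⟨i, Finset.mem_range.mpr hi, hfi⟩) _ _ this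

section Rho
variable {n : ℕ} (m : ℕ) (E : Finset (Fin n)) (hle : E.card ≤ m)

/-- support contained in `E` -/
def SuppE (E : Finset (Fin n)) (σ : Pm n) : Prop := ∀ x, x ∉ E → σ x = x

variable {E}

lemma suppE_one : SuppE E (1 : Pm n) := fun _ _ => rfl

lemma suppE_mul {σ τ : Pm n} (hσ : SuppE E σ) (hτ : SuppE E τ) : SuppE E (σ * τ) :=
  fun x hx => by
    show σ (τ x) = x
    rw [hτ x hx, hσ x hx]

lemma suppE_inv {σ : Pm n} (hσ : SuppE E σ) : SuppE E σ⁻¹ := fun x hx => by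
  have := hσ x hx
  conv_lhs => rw [← this]
  simp

lemma suppE_swap {c d : Fin n} (hc : c ∈ E) (hd : d ∈ E) : SuppE E (Equiv.swap c d) :=
  fun x hx => Equiv.swap_apply_of_ne_of_ne (fun h => hx (h ▸ hc)) (fun h => hx (h ▸ hd))

lemma suppE_mem_iff {σ : Pm n} (hσ : SuppE E σ) (x : Fin n) : x ∈ E ↔ σ x ∈ E := by
  constructor
  · intro hx
    by_contra hcon
    have h1 : σ (σ x) = σ x := hσ _ hcon
    have := σ.injective h1
    rw [this] at hcon
    exact hcon hx
  · intro hx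
    by_contra hcon
    rw [hσ x hcon] at hx
    exact hcon hx

lemma mem_of_suppE_move {σ : Pm n} (hσ : SuppE E σ) {x : Fin n} (hx : σ x ≠ x) : x ∈ E := by
  by_contra hcon
  exact hx (hσ x hcon)

/-- the renumbering map `E → Fin m` (order preserving) -/
noncomputable def kap (c : Fin n) (hc : c ∈ E) : Fin m :=
  Fin.castLE hle ((E.orderIsoOfFin rfl).symm ⟨c, hc⟩)

lemma kap_lt_iff {c d : Fin n} (hc : c ∈ E) (hd : d ∈ E) :
    kap m hle c hc < kap m hle d hd ↔ c < d := by
  rw [kap, kap]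
  rw [(Fin.strictMono_castLE hle).lt_iff_lt]
  rw [(E.orderIsoOfFin rfl).symm.lt_iff_lt]
  exact Subtype.mk_lt_mk

lemma kap_inj {c d : Fin n} (hc : c ∈ E) (hd : d ∈ E)
    (heq : kap m hle c hc = kap m hle d hd) : c = d := by
  rw [kap, kap] at heq
  have h1 := Fin.castLE_injective hle heq
  have h2 := (E.orderIsoOfFin rfl).symm.injective h1
  exact Subtype.mk_eq_mk.mp h2

lemma kap_val_lt {c : Fin n} (hc : c ∈ E) : (kap m hle c hc).val < E.card := by
  rw [kap]
  exact ((E.orderIsoOfFin rfl).symm ⟨c, hc⟩).isLt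

lemma exists_kap {x : Fin m} (hx : x.val < E.card) :
    ∃ c : Fin n, ∃ hc : c ∈ E, kap m hle c hc = x := by
  refine ⟨(E.orderIsoOfFin rfl ⟨x.val, hx⟩ : {y // y ∈ E}), ((E.orderIsoOfFin rfl) ⟨x.val, hx⟩).2, ?_⟩
  rw [kap]
  have : (⟨((E.orderIsoOfFin rfl ⟨x.val, hx⟩ : {y // y ∈ E}) : Fin n),
      ((E.orderIsoOfFin rfl) ⟨x.val, hx⟩).2⟩ : {y // y ∈ E}) = E.orderIsoOfFin rfl ⟨x.val, hx⟩ :=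
    Subtype.ext rfl
  rw [this, OrderIso.symm_apply_apply]
  exact Fin.ext rfl

/-- transport of an `E`-supported permutation to `𝔖ₘ` -/
noncomputable def rho (σ : Pm n) : Pm m :=
  @dite _ (SuppE E σ) (Classical.propDecidable _)
    (fun hσ =>
      ((Equiv.permCongr (E.orderIsoOfFin rfl).toEquiv.symm
        (σ.subtypePerm (fun x => (suppE_mem_iff hσ x).symm))).viaEmbedding (Fin.castLEEmb hle)))
    (fun _ => 1)

lemma kap_congr {c d : Fin n} (hc : c ∈ E) (hd : d ∈ E) (h : c = d) :
    kap m hle c hc = kap m hle d hd := by subst h; rfl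

lemma rho_apply_kap {σ : Pm n} (hσ : SuppE E σ) {c : Fin n} (hc : c ∈ E) :
    rho m hle σ (kap m hle c hc) = kap m hle (σ c) ((suppE_mem_iff hσ c).mp hc) := by
  have hk : kap m hle c hc = (Fin.castLEEmb hle) ((E.orderIsoOfFin rfl).toEquiv.symm ⟨c, hc⟩) :=
    rfl
  rw [rho, dif_pos hσ, hk, Equiv.Perm.viaEmbedding_apply]
  simp only [Equiv.permCongr_apply, Equiv.symm_symm, Equiv.symm_apply_apply]
  have h2 : (E.orderIsoOfFin rfl).toEquiv ((E.orderIsoOfFin rfl).toEquiv.symm ⟨c, hc⟩) =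
      ⟨c, hc⟩ := Equiv.apply_symm_apply _ _
  rw [h2]
  rfl

lemma rho_apply_of_ge {σ : Pm n} {x : Fin m} (hx : ¬ x.val < E.card) : rho m hle σ x = x := by
  rw [rho]
  split
  · apply Equiv.Perm.viaEmbedding_apply_of_notMem
    rintro ⟨y, rfl⟩
    exact hx y.isLt
  · rfl

lemma rho_one : rho m hle (1 : Pm n) = 1 := by
  apply Equiv.ext; intro x
  by_cases hx : x.val < E.card
  · obtain ⟨c, hc, rfl⟩ := exists_kap m hle hx
    rw [rho_apply_kap m hle suppE_one hc]
    rfl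
  · rw [rho_apply_of_ge m hle hx]
    rfl

lemma rho_mul {σ τ : Pm n} (hσ : SuppE E σ) (hτ : SuppE E τ) :
    rho m hle (σ * τ) = rho m hle σ * rho m hle τ := by
  apply Equiv.ext; intro x
  by_cases hx : x.val < E.card
  · obtain ⟨c, hc, rfl⟩ := exists_kap m hle hx
    rw [rho_apply_kap m hle (suppE_mul hσ hτ) hc]
    show _ = rho m hle σ (rho m hle τ (kap m hle c hc))
    rw [rho_apply_kap m hle hτ hc, rho_apply_kap m hle hσ _]
    rfl
  · rw [rho_apply_of_ge m hle hx]
    show _ = rho m hle σ (rho m hle τ x)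
    rw [rho_apply_of_ge m hle hx, rho_apply_of_ge m hle hx]

lemma rho_inv {σ : Pm n} (hσ : SuppE E σ) : rho m hle σ⁻¹ = (rho m hle σ)⁻¹ := by
  have h1 : rho m hle σ⁻¹ * rho m hle σ = 1 := by
    rw [← rho_mul m hle (suppE_inv hσ) hσ, inv_mul_cancel, rho_one]
  exact eq_inv_of_mul_eq_one_left h1

lemma rho_inj {σ τ : Pm n} (hσ : SuppE E σ) (hτ : SuppE E τ)
    (heq : rho m hle σ = rho m hle τ) : σ = τ := by
  apply Equiv.ext; intro c
  by_cases hc : c ∈ E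
  · have := congrArg (fun g : Pm m => g (kap m hle c hc)) heq
    simp only [rho_apply_kap m hle hσ hc, rho_apply_kap m hle hτ hc] at this
    exact kap_inj m hle _ _ this
  · rw [hσ c hc, hτ c hc]

lemma rho_swap {c d : Fin n} (hc : c ∈ E) (hd : d ∈ E) :
    rho m hle (Equiv.swap c d) = Equiv.swap (kap m hle c hc) (kap m hle d hd) := by
  apply Equiv.ext; intro x
  by_cases hx : x.val < E.card
  · obtain ⟨z, hz, rfl⟩ := exists_kap m hle hx
    rw [rho_apply_kap m hle (suppE_swap hc hd) hz]
    by_cases hzc : z = c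
    · have e2 : Equiv.swap (kap m hle c hc) (kap m hle d hd) (kap m hle z hz) =
          kap m hle d hd := by
        rw [kap_congr m hle hz hc hzc, Equiv.swap_apply_left]
      rw [e2]
      apply kap_congr
      rw [hzc, Equiv.swap_apply_left]
    · by_cases hzd : z = d
      · have e2 : Equiv.swap (kap m hle c hc) (kap m hle d hd) (kap m hle z hz) =
            kap m hle c hc := by
          rw [kap_congr m hle hz hd hzd, Equiv.swap_apply_right]
        rw [e2]
        apply kap_congr
        rw [hzd, Equiv.swap_apply_right]
      · have e2 : Equiv.swap (kap m hle c hc) (kap m hle d hd) (kap m hle z hz) =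
            kap m hle z hz := by
          apply Equiv.swap_apply_of_ne_of_ne
          · intro hcon; exact hzc (kap_inj m hle hz hc hcon)
          · intro hcon; exact hzd (kap_inj m hle hz hd hcon)
        rw [e2]
        apply kap_congr
        rw [Equiv.swap_apply_of_ne_of_ne hzc hzd]
  · rw [rho_apply_of_ge m hle hx]
    have e2 : Equiv.swap (kap m hle c hc) (kap m hle d hd) x = x := by
      apply Equiv.swap_apply_of_ne_of_ne
      · intro hcon; rw [hcon] at hx; exact hx (kap_val_lt m hle hc)
      · intro hcon; rw [hcon] at hx; exact hx (kap_val_lt m hle hd)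
    rw [e2]

end Rho

section Fmap
variable {n : ℕ} (m : ℕ) (E : Finset (Fin n)) (hle : E.card ≤ m) (u : Pm n)

noncomputable def patE : Pm E.card := rE n E.card E rfl u

noncomputable def thE : Fin E.card ≃o {x // x ∈ posSet u E} :=
  (posSet u E).orderIsoOfFin (posSet_card u E)

lemma patE_apply (y : Fin E.card) :
    patE E u y = (E.orderIsoOfFin rfl).toEquiv.symm
      ⟨u (thE E u y), mem_posSet.mp (thE E u y).2⟩ := rfl

noncomputable def uprime : Pm m := (patE E u).viaEmbedding (Fin.castLEEmb hle)

noncomputable def fmap (w : Pm n) : Pm m := rho m hle (w * u⁻¹) * uprime m E hle u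

lemma uprime_inv_kap {c : Fin n} (hc : c ∈ E) :
    (uprime m E hle u)⁻¹ (kap m hle c hc) =
      Fin.castLE hle ((thE E u).symm ⟨u⁻¹ c, mem_posSet.mpr (by simp [hc])⟩) := by
  have key : uprime m E hle u
      (Fin.castLE hle ((thE E u).symm ⟨u⁻¹ c, mem_posSet.mpr (by simp [hc])⟩)) =
      kap m hle c hc := by
    have h1 : uprime m E hle u
        (Fin.castLE hle ((thE E u).symm ⟨u⁻¹ c, mem_posSet.mpr (by simp [hc])⟩)) =
        Fin.castLE hle (patE E u ((thE E u).symm ⟨u⁻¹ c, mem_posSet.mpr (by simp [hc])⟩)) :=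
      Equiv.Perm.viaEmbedding_apply _ _ _
    rw [h1, patE_apply]
    show Fin.castLE hle ((E.orderIsoOfFin rfl).toEquiv.symm _) =
      Fin.castLE hle ((E.orderIsoOfFin rfl).toEquiv.symm ⟨c, hc⟩)
    apply congrArg
    apply congrArg
    apply Subtype.ext
    show u ((thE E u) ((thE E u).symm ⟨u⁻¹ c, _⟩)) = c
    rw [OrderIso.apply_symm_apply]
    exact Equiv.apply_symm_apply u c
  rw [← key]; exact Equiv.symm_apply_apply _ _

lemma fmap_inv_kap {w : Pm n} (hw : SuppE E (w * u⁻¹)) {c : Fin n} (hc : c ∈ E) :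
    (fmap m E hle u w)⁻¹ (kap m hle c hc) =
      Fin.castLE hle ((thE E u).symm ⟨w⁻¹ c, mem_posSet.mpr (by
        have h1 := (suppE_mem_iff (suppE_inv hw) c).mp hc
        have h2 : (w * u⁻¹)⁻¹ c = u (w⁻¹ c) := by
          rw [mul_inv_rev, inv_inv]; rfl
        rwa [h2] at h1)⟩) := by
  have hfinv : (fmap m E hle u w)⁻¹ = (uprime m E hle u)⁻¹ * (rho m hle (w * u⁻¹))⁻¹ := by
    rw [fmap, mul_inv_rev]
  rw [hfinv]
  show (uprime m E hle u)⁻¹ ((rho m hle (w * u⁻¹))⁻¹ (kap m hle c hc)) = _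
  rw [← rho_inv m hle hw, rho_apply_kap m hle (suppE_inv hw) hc]
  rw [uprime_inv_kap]
  congr 1
  apply OrderIso.injective ((thE E u))
  rw [OrderIso.apply_symm_apply, OrderIso.apply_symm_apply]
  apply Subtype.ext
  show u⁻¹ ((w * u⁻¹)⁻¹ c) = w⁻¹ c
  rw [mul_inv_rev, inv_inv]
  show u⁻¹ (u (w⁻¹ c)) = w⁻¹ c
  exact Equiv.symm_apply_apply u _

lemma fmap_order {w : Pm n} (hw : SuppE E (w * u⁻¹)) {c d : Fin n} (hc : c ∈ E) (hd : d ∈ E) :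
    ((fmap m E hle u w)⁻¹ (kap m hle c hc) < (fmap m E hle u w)⁻¹ (kap m hle d hd) ↔
      w⁻¹ c < w⁻¹ d) := by
  rw [fmap_inv_kap m E hle u hw hc, fmap_inv_kap m E hle u hw hd]
  rw [(Fin.strictMono_castLE hle).lt_iff_lt, (thE E u).symm.lt_iff_lt]
  exact Subtype.mk_lt_mk

lemma fmap_mul {σ w : Pm n} (hσ : SuppE E σ) (hw : SuppE E (w * u⁻¹)) :
    fmap m E hle u (σ * w) = rho m hle σ * fmap m E hle u w := by
  rw [fmap, fmap, show σ * w * u⁻¹ = σ * (w * u⁻¹) from mul_assoc _ _ _,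
    rho_mul m hle hσ hw, mul_assoc]

lemma fmap_u : fmap m E hle u u = uprime m E hle u := by
  rw [fmap, mul_inv_cancel, rho_one, one_mul]

lemma fmap_inj {w w' : Pm n} (hw : SuppE E (w * u⁻¹)) (hw' : SuppE E (w' * u⁻¹))
    (heq : fmap m E hle u w = fmap m E hle u w') : w = w' := by
  rw [fmap, fmap] at heq
  have h1 := mul_right_cancel heq
  have h2 := rho_inj m hle hw hw' h1
  have := congrArg (· * u) h2
  simpa [mul_assoc] using this

lemma fmap_edge_iff {w : Pm n} (hw : SuppE E (w * u⁻¹)) {c d : Fin n} (hc : c ∈ E)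
    (hd : d ∈ E) (hcd : c ≠ d) :
    BEdge w (Equiv.swap c d * w) ↔
      BEdge (fmap m E hle u w)
        (Equiv.swap (kap m hle c hc) (kap m hle d hd) * fmap m E hle u w) := by
  have hiswap : ∀ (k : ℕ) (a b : Fin k) (hab : a ≠ b) (g : Pm k),
      (Equiv.swap a b * g * g⁻¹).IsSwap := by
    intro k a b hab g
    rw [mul_inv_cancel_right]
    exact ⟨a, b, hab, rfl⟩
  have hkcd : kap m hle c hc ≠ kap m hle d hd := fun hcon => hcd (kap_inj m hle hc hd hcon)
  have main : ∀ (c' d' : Fin n) (hc' : c' ∈ E) (hd' : d' ∈ E), c' < d' →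
      (len w < len (Equiv.swap c' d' * w) ↔
        len (fmap m E hle u w) <
          len (Equiv.swap (kap m hle c' hc') (kap m hle d' hd') * fmap m E hle u w)) := by
    intro c' d' hc' hd' hlt
    rw [len_lt_swap_iff w c' d' hlt,
      len_lt_swap_iff (fmap m E hle u w) _ _ ((kap_lt_iff m hle hc' hd').mpr hlt)]
    exact (fmap_order m E hle u hw hc' hd').symm
  constructor
  · rintro ⟨_, hlen⟩
    refine ⟨hiswap m _ _ hkcd _, ?_⟩
    rcases lt_or_gt_of_ne hcd with hlt | hgt
    · exact (main c d hc hd hlt).mp hlen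
    · rw [Equiv.swap_comm] at hlen ⊢
      exact (main d c hd hc hgt).mp hlen
  · rintro ⟨_, hlen⟩
    refine ⟨hiswap n _ _ hcd _, ?_⟩
    rcases lt_or_gt_of_ne hcd with hlt | hgt
    · exact (main c d hc hd hlt).mpr hlen
    · rw [Equiv.swap_comm] at hlen ⊢
      exact (main d c hd hc hgt).mpr hlen

end Fmap

section Master
variable {n h : ℕ} {u v : Pm n} {F : Set (ℕ → Pm n)} {E : Finset (Fin n)}

lemma lab_suppE (hE : ∀ a : Fin n, a ∈ E ↔ ∃ p ∈ F, ∃ i, i < h ∧ lab p i a ≠ a)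
    {p : ℕ → Pm n} (hp : p ∈ F) {i : ℕ} (hi : i < h) : SuppE E (lab p i) := by
  intro x hx
  by_contra hcon
  exact hx ((hE x).mpr ⟨p, hp, i, hi, hcon⟩)

lemma vert_coset (hF : IsFlipclass n h u v F)
    (hE : ∀ a : Fin n, a ∈ E ↔ ∃ p ∈ F, ∃ i, i < h ∧ lab p i a ≠ a)
    {p : ℕ → Pm n} (hp : p ∈ F) : ∀ j, SuppE E (p j * u⁻¹) := by
  have hpath := isPath_of_mem hF hp
  intro j
  induction j with
  | zero => rw [hpath.1, mul_inv_cancel]; exact suppE_one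
  | succ j IH =>
    by_cases hj : j < h
    · have : p (j + 1) * u⁻¹ = lab p j * (p j * u⁻¹) := by
        rw [lab]; group
      rw [this]
      exact suppE_mul (lab_suppE hE hp hj) IH
    · have h1 : p (j + 1) = p j := by
        rw [hpath.2.1 (j+1) (by omega), hpath.2.1 j (by omega)]
      rw [h1]; exact IH

lemma lab_swap_mem (hF : IsFlipclass n h u v F)
    (hE : ∀ a : Fin n, a ∈ E ↔ ∃ p ∈ F, ∃ i, i < h ∧ lab p i a ≠ a)
    {p : ℕ → Pm n} (hp : p ∈ F) {i : ℕ} (hi : i < h) :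
    ∃ c d : Fin n, ∃ hc : c ∈ E, ∃ hd : d ∈ E, c ≠ d ∧ lab p i = Equiv.swap c d := by
  obtain ⟨c, d, hcd, hsw⟩ := lab_isSwap (isPath_of_mem hF hp) hi
  have hsupp := lab_suppE hE hp hi
  have hc : c ∈ E := by
    apply mem_of_suppE_move hsupp
    rw [hsw, Equiv.swap_apply_left]
    exact hcd.symm
  have hd : d ∈ E := by
    apply mem_of_suppE_move hsupp
    rw [hsw, Equiv.swap_apply_right]
    exact hcd
  exact ⟨c, d, hc, hd, hcd, hsw⟩

variable (m : ℕ) (hle : E.card ≤ m)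

lemma fmap_ratio {w w' : Pm n} (hw : SuppE E (w * u⁻¹)) (hw' : SuppE E (w' * u⁻¹)) :
    fmap m E hle u w' * (fmap m E hle u w)⁻¹ = rho m hle (w' * w⁻¹) := by
  rw [fmap, fmap]
  rw [show rho m hle (w' * u⁻¹) * uprime m E hle u *
      (rho m hle (w * u⁻¹) * uprime m E hle u)⁻¹ =
      rho m hle (w' * u⁻¹) * (rho m hle (w * u⁻¹))⁻¹ by group]
  rw [← rho_inv m hle hw, ← rho_mul m hle hw' (suppE_inv hw)]
  congr 1
  group

lemma fmap_lab (hF : IsFlipclass n h u v F)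
    (hE : ∀ a : Fin n, a ∈ E ↔ ∃ p ∈ F, ∃ i, i < h ∧ lab p i a ≠ a)
    {p : ℕ → Pm n} (hp : p ∈ F) (i : ℕ) :
    lab (fmap m E hle u ∘ p) i = rho m hle (lab p i) := by
  show fmap m E hle u (p (i+1)) * (fmap m E hle u (p i))⁻¹ = _
  rw [fmap_ratio m hle (vert_coset hF hE hp i) (vert_coset hF hE hp (i+1))]
  rfl

lemma fmap_path (hF : IsFlipclass n h u v F)
    (hE : ∀ a : Fin n, a ∈ E ↔ ∃ p ∈ F, ∃ i, i < h ∧ lab p i a ≠ a)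
    {p : ℕ → Pm n} (hp : p ∈ F) :
    IsPath m h (fmap m E hle u u) (fmap m E hle u v) (fmap m E hle u ∘ p) := by
  have hpath := isPath_of_mem hF hp
  refine ⟨by rw [Function.comp_apply, hpath.1], fun j hj => by
    rw [Function.comp_apply, hpath.2.1 j hj], ?_⟩
  intro i hi
  obtain ⟨c, d, hc, hd, hcd, hsw⟩ := lab_swap_mem hF hE hp hi
  have hstep : p (i + 1) = Equiv.swap c d * p i := by rw [← hsw, lab_mul]
  have hedge : BEdge (p i) (Equiv.swap c d * p i) := hstep ▸ hpath.2.2 i hi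
  have hdown := (fmap_edge_iff m E hle u (vert_coset hF hE hp i) hc hd hcd).mp hedge
  show BEdge (fmap m E hle u (p i)) (fmap m E hle u (p (i+1)))
  rw [hstep, fmap_mul m E hle u (suppE_swap hc hd) (vert_coset hF hE hp i),
    rho_swap m hle hc hd]
  exact hdown

lemma fmap_flipstep (hF : IsFlipclass n h u v F)
    (hE : ∀ a : Fin n, a ∈ E ↔ ∃ p ∈ F, ∃ i, i < h ∧ lab p i a ≠ a)
    {p q : ℕ → Pm n} (hp : p ∈ F) (hq : q ∈ F) {i : ℕ} (hflip : FlipAt h i p q) :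
    FlipAt h i (fmap m E hle u ∘ p) (fmap m E hle u ∘ q) := by
  obtain ⟨h0, hih, hne, hagree⟩ := hflip
  refine ⟨h0, hih, ?_, fun j hj => by
    rw [Function.comp_apply, Function.comp_apply, hagree j hj]⟩
  intro hcon
  exact hne (fmap_inj m E hle u (vert_coset hF hE hp i) (vert_coset hF hE hq i) hcon)

end Master

section Master2
variable {n h : ℕ} {u v : Pm n} {F : Set (ℕ → Pm n)} {E : Finset (Fin n)}
variable (m : ℕ) (hle : E.card ≤ m)

lemma swap_low_kap {g : Pm m} (hg : g.IsSwap)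
    (hlow : ∀ x : Fin m, ¬ x.val < E.card → g x = x) :
    ∃ c d : Fin n, ∃ hc : c ∈ E, ∃ hd : d ∈ E, c ≠ d ∧
      g = Equiv.swap (kap m hle c hc) (kap m hle d hd) := by
  obtain ⟨x, y, hxy, rfl⟩ := hg
  have hx : x.val < E.card := by
    by_contra hx
    have := hlow x hx
    rw [Equiv.swap_apply_left] at this
    exact hxy this.symm
  have hy : y.val < E.card := by
    by_contra hy
    have := hlow y hy
    rw [Equiv.swap_apply_right] at this
    exact hxy this
  obtain ⟨c, hc, hck⟩ := exists_kap m hle hx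
  obtain ⟨d, hd, hdk⟩ := exists_kap m hle hy
  refine ⟨c, d, hc, hd, ?_, by rw [hck, hdk]⟩
  intro hcon
  apply hxy
  rw [← hck, ← hdk]
  exact kap_congr m hle hc hd hcon

lemma fmap_lift (hF : IsFlipclass n h u v F)
    (hE : ∀ a : Fin n, a ∈ E ↔ ∃ p ∈ F, ∃ i, i < h ∧ lab p i a ≠ a)
    {p : ℕ → Pm n} (hp : p ∈ F) {r' : ℕ → Pm m}
    (hstep : FlipStep m h (fmap m E hle u u) (fmap m E hle u v) (fmap m E hle u ∘ p) r') :
    ∃ r : ℕ → Pm n, FlipStep n h u v p r ∧ fmap m E hle u ∘ r = r' := by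
  obtain ⟨hp', hr', i, h0i, hih, hnei, hagree⟩ := hstep
  have hpath := isPath_of_mem hF hp
  have hi1 : i - 1 + 1 = i := by omega
  have hri1 : r' (i-1) = fmap m E hle u (p (i-1)) := (hagree (i-1) (by omega)).symm
  have hri2 : r' (i+1) = fmap m E hle u (p (i+1)) := (hagree (i+1) (by omega)).symm
  have e1 : BEdge (r' (i-1)) (r' i) := by
    have := hr'.2.2 (i-1) (by omega)
    rwa [hi1] at this
  have e2 : BEdge (r' i) (r' (i+1)) := hr'.2.2 i hih
  set s' := r' i * (r' (i-1))⁻¹ with hs'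
  set t' := r' (i+1) * (r' i)⁻¹ with ht'
  have hs'swap : s'.IsSwap := e1.1
  have ht'swap : t'.IsSwap := e2.1
  set π := p (i+1) * (p (i-1))⁻¹ with hπdef
  have hπsupp : SuppE E π := by
    have hπ2 : π = lab p i * lab p (i-1) := (flip_labels_prod h0i).symm
    rw [hπ2]
    exact suppE_mul (lab_suppE hE hp hih) (lab_suppE hE hp (by omega))
  have hπne : π ≠ 1 := by
    intro hcon
    have hpp : p (i+1) = p (i-1) := by
      have := congrArg (· * p (i-1)) hcon
      simpa [hπdef, mul_assoc] using this
    have l1 := len_lt_path hpath (show i - 1 < h by omega)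
    rw [hi1] at l1
    have l2 := len_lt_path hpath hih
    rw [hpp] at l2
    omega
  have hratio : t' * s' = rho m hle π := by
    rw [hs', ht',
      show r' (i+1) * (r' i)⁻¹ * (r' i * (r' (i-1))⁻¹) = r' (i+1) * (r' (i-1))⁻¹ by group,
      hri1, hri2]
    exact fmap_ratio m hle (vert_coset hF hE hp (i-1)) (vert_coset hF hE hp (i+1))
  have hπ'ne : t' * s' ≠ 1 := by
    rw [hratio]
    intro hcon
    apply hπne
    apply rho_inj m hle hπsupp suppE_one
    rw [hcon, rho_one]
  have hs'low : ∀ x : Fin m, ¬ x.val < E.card → s' x = x := fun x hx =>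
    (supp_stable hs'swap ht'swap hπ'ne
      (show (t' * s') x = x by rw [hratio]; exact rho_apply_of_ge m hle hx)).1
  have ht'low : ∀ x : Fin m, ¬ x.val < E.card → t' x = x := fun x hx =>
    (supp_stable hs'swap ht'swap hπ'ne
      (show (t' * s') x = x by rw [hratio]; exact rho_apply_of_ge m hle hx)).2
  obtain ⟨c, d, hc, hd, hcd, hs'eq⟩ := swap_low_kap m hle hs'swap hs'low
  obtain ⟨c₂, d₂, hc₂, hd₂, hcd₂, ht'eq⟩ := swap_low_kap m hle ht'swap ht'low
  set r : ℕ → Pm n := fun j => if j = i then Equiv.swap c d * p (i-1) else p j with hrdef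
  have hrj : ∀ j, j ≠ i → r j = p j := fun j hj => if_neg hj
  have hrii : r i = Equiv.swap c d * p (i-1) := if_pos rfl
  have hvert_ri : SuppE E (r i * u⁻¹) := by
    rw [hrii, mul_assoc]
    exact suppE_mul (suppE_swap hc hd) (vert_coset hF hE hp (i-1))
  have hfri : fmap m E hle u (r i) = r' i := by
    rw [hrii, fmap_mul m E hle u (suppE_swap hc hd) (vert_coset hF hE hp (i-1)),
      rho_swap m hle hc hd, ← hs'eq, ← hri1, hs']
    group
  have hcomp : fmap m E hle u ∘ r = r' := by
    funext j
    by_cases hj : j = i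
    · rw [hj]; exact hfri
    · rw [Function.comp_apply, hrj j hj, ← hagree j hj]; rfl
  have eU1 : BEdge (p (i-1)) (r i) := by
    rw [hrii]
    apply (fmap_edge_iff m E hle u (vert_coset hF hE hp (i-1)) hc hd hcd).mpr
    rw [← hs'eq, ← hri1, hs',
      show r' i * (r' (i-1))⁻¹ * r' (i-1) = r' i by group]
    exact e1
  have hsupp_t2 : SuppE E (p (i+1) * (r i)⁻¹) := by
    rw [show p (i+1) * (r i)⁻¹ = (p (i+1) * u⁻¹) * (r i * u⁻¹)⁻¹ by group]
    exact suppE_mul (vert_coset hF hE hp (i+1)) (suppE_inv hvert_ri)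
  have ht2 : p (i+1) * (r i)⁻¹ = Equiv.swap c₂ d₂ := by
    apply rho_inj m hle hsupp_t2 (suppE_swap hc₂ hd₂)
    rw [← fmap_ratio m hle hvert_ri (vert_coset hF hE hp (i+1)),
      hfri, ← hri2, rho_swap m hle hc₂ hd₂, ← ht'eq, ht']
  have eU2 : BEdge (r i) (p (i+1)) := by
    have hstep2 : p (i+1) = Equiv.swap c₂ d₂ * r i := by
      rw [← ht2]; group
    rw [hstep2]
    apply (fmap_edge_iff m E hle u hvert_ri hc₂ hd₂ hcd₂).mpr
    rw [← ht'eq, hfri, ht',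
      show r' (i+1) * (r' i)⁻¹ * r' i = r' (i+1) by group]
    exact e2
  have hrpath : IsPath n h u v r := by
    refine ⟨by rw [hrj 0 (by omega)]; exact hpath.1,
      fun j hj => by rw [hrj j (by omega)]; exact hpath.2.1 j hj, ?_⟩
    intro j hj
    by_cases hji : j = i - 1
    · subst hji
      rw [hrj (i-1) (by omega), hi1]
      exact eU1
    · by_cases hji' : j = i
      · rw [hji', hrj (i+1) (by omega)]
        exact eU2
      · rw [hrj j hji', hrj (j+1) (by omega)]
        exact hpath.2.2 j hj
  have hflip : FlipAt h i p r := by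
    refine ⟨h0i, hih, ?_, fun j hj => (hrj j hj).symm⟩
    intro hcon
    apply hnei
    show fmap m E hle u (p i) = r' i
    rw [hcon, hfri]
  exact ⟨r, ⟨hpath, hrpath, i, hflip⟩, hcomp⟩

end Master2

lemma master {n h : ℕ} {u v : Pm n} {F : Set (ℕ → Pm n)} (hF : IsFlipclass n h u v F)
    {E : Finset (Fin n)}
    (hE : ∀ a : Fin n, a ∈ E ↔ ∃ p ∈ F, ∃ i, i < h ∧ lab p i a ≠ a)
    (m : ℕ) (hle : E.card ≤ m) :
    ∃ u' v' : Pm m, ∃ F' : Set (ℕ → Pm m),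
      IsFlipclass m h u' v' F' ∧ FlipclassIso n m h F F' := by
  classical
  obtain ⟨p₀, hp₀path, hFdef⟩ := hF
  have hF2 : IsFlipclass n h u v F := ⟨p₀, hp₀path, hFdef⟩
  have hp₀ : p₀ ∈ F := by rw [hFdef]; exact Relation.ReflTransGen.refl
  set F' : Set (ℕ → Pm m) := {q' | ∃ q ∈ F, fmap m E hle u ∘ q = q'} with hF'def
  have hmemF : ∀ {p q : ℕ → Pm n}, p ∈ F → FlipStep n h u v p q → q ∈ F := by
    intro p q hpF hstep
    rw [hFdef] at hpF ⊢
    exact hpF.tail hstep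
  have hFstep' : ∀ {q' r' : ℕ → Pm m}, q' ∈ F' →
      FlipStep m h (fmap m E hle u u) (fmap m E hle u v) q' r' → r' ∈ F' := by
    rintro q' r' ⟨q, hq, rfl⟩ hstep
    obtain ⟨r, hstep', hcomp⟩ := fmap_lift m hle hF2 hE hq hstep
    exact ⟨r, hmemF hq hstep', hcomp⟩
  have hchain : ∀ {q : ℕ → Pm n}, q ∈ F →
      Relation.ReflTransGen (FlipStep m h (fmap m E hle u u) (fmap m E hle u v))
        (fmap m E hle u ∘ p₀) (fmap m E hle u ∘ q) := by
    intro q hq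
    have hq' : Relation.ReflTransGen (FlipStep n h u v) p₀ q := by rw [hFdef] at hq; exact hq
    clear hq
    induction hq' with
    | refl => exact .refl
    | @tail b c' hq' step IH =>
      have hbF : b ∈ F := by rw [hFdef]; exact hq'
      have hcF : c' ∈ F := by rw [hFdef]; exact hq'.tail step
      refine IH.tail ?_
      obtain ⟨_, _, i, hflip⟩ := step
      exact ⟨fmap_path m hle hF2 hE hbF, fmap_path m hle hF2 hE hcF, i,
        fmap_flipstep m hle hF2 hE hbF hcF hflip⟩
  have hclass : IsFlipclass m h (fmap m E hle u u) (fmap m E hle u v) F' := by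
    refine ⟨fmap m E hle u ∘ p₀, fmap_path m hle hF2 hE hp₀, ?_⟩
    ext q'
    constructor
    · rintro ⟨q, hq, rfl⟩
      exact hchain hq
    · intro hq'
      have hq'' : Relation.ReflTransGen
          (FlipStep m h (fmap m E hle u u) (fmap m E hle u v))
          (fmap m E hle u ∘ p₀) q' := hq'
      clear hq'
      induction hq'' with
      | refl => exact ⟨p₀, hp₀, rfl⟩
      | tail hq₂ step IH => exact hFstep' IH step
  refine ⟨fmap m E hle u u, fmap m E hle u v, F', hclass,
    fmap m E hle u, rho m hle, ?_, ?_, ?_, ?_, ?_, ?_⟩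
  · refine ⟨?_, ?_, ?_⟩
    · rintro a ⟨p, hp, i, hi, rfl⟩
      exact ⟨fmap m E hle u ∘ p, ⟨p, hp, rfl⟩, i, hi, rfl⟩
    · rintro a ⟨p, hp, i, hi, rfl⟩ b ⟨q, hq, j, hj, rfl⟩ heq
      exact fmap_inj m E hle u (vert_coset hF2 hE hp i) (vert_coset hF2 hE hq j) heq
    · rintro b ⟨q', ⟨q, hq, rfl⟩, i, hi, rfl⟩
      exact ⟨q i, ⟨q, hq, i, hi, rfl⟩, rfl⟩
  · refine ⟨?_, ?_, ?_⟩
    · intro p hp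
      exact ⟨p, hp, rfl⟩
    · intro p hp q hq heq
      funext j
      exact fmap_inj m E hle u (vert_coset hF2 hE hp j) (vert_coset hF2 hE hq j)
        (congrFun heq j)
    · rintro q' ⟨q, hq, rfl⟩
      exact ⟨q, hq, rfl⟩
  · intro p hp q hq i hflip
    exact fmap_flipstep m hle hF2 hE hp hq hflip
  · refine ⟨?_, ?_, ?_⟩
    · rintro t ⟨p, hp, i, hi, rfl⟩
      exact ⟨fmap m E hle u ∘ p, ⟨p, hp, rfl⟩, i, hi, fmap_lab m hle hF2 hE hp i⟩
    · rintro s ⟨p, hp, i, hi, rfl⟩ t ⟨q, hq, j, hj, rfl⟩ heq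
      exact rho_inj m hle (lab_suppE hE hp hi) (lab_suppE hE hq hj) heq
    · rintro t' ⟨q', ⟨q, hq, rfl⟩, i, hi, rfl⟩
      exact ⟨lab q i, ⟨q, hq, i, hi, rfl⟩, (fmap_lab m hle hF2 hE hq i).symm⟩
  · intro p hp i _
    exact (fmap_lab m hle hF2 hE hp i).symm
  · rintro s t hs ht ⟨a, b, c', d', hab, hcd, rfl, rfl, hord⟩
    obtain ⟨p, hp, i, hi, hlabs⟩ := hs
    obtain ⟨q, hq, j, hj, hlabt⟩ := ht
    have hsupp_s : SuppE E (Equiv.swap a b) := hlabs ▸ lab_suppE hE hp hi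
    have hsupp_t : SuppE E (Equiv.swap c' d') := hlabt ▸ lab_suppE hE hq hj
    have hane : a ≠ b := ne_of_lt hab
    have hcne : c' ≠ d' := ne_of_lt hcd
    have ha : a ∈ E := mem_of_suppE_move hsupp_s
      (by rw [Equiv.swap_apply_left]; exact hane.symm)
    have hb : b ∈ E := mem_of_suppE_move hsupp_s
      (by rw [Equiv.swap_apply_right]; exact hane)
    have hc : c' ∈ E := mem_of_suppE_move hsupp_t
      (by rw [Equiv.swap_apply_left]; exact hcne.symm)
    have hd : d' ∈ E := mem_of_suppE_move hsupp_t
      (by rw [Equiv.swap_apply_right]; exact hcne)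
    refine ⟨kap m hle a ha, kap m hle b hb, kap m hle c' hc, kap m hle d' hd,
      (kap_lt_iff m hle ha hb).mpr hab, (kap_lt_iff m hle hc hd).mpr hcd,
      rho_swap m hle ha hb, rho_swap m hle hc hd, ?_⟩
    rcases hord with h1 | ⟨h1, h2⟩
    · exact Or.inl ((kap_lt_iff m hle ha hc).mpr h1)
    · refine Or.inr ⟨kap_congr m hle ha hc h1, ?_⟩
      rcases lt_or_eq_of_le h2 with h' | h'
      · exact le_of_lt ((kap_lt_iff m hle hb hd).mpr h')
      · exact le_of_eq (kap_congr m hle hb hd h')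

/-- Theorem: an `h`-flipclass `F` of `𝔖ₙ` with `e = |E(F)|` is isomorphic to an
`h`-flipclass of `𝔖ₑ`; in particular, if `F` is irreducible then `e ≤ h+1` and `F` is
isomorphic to an `h`-flipclass of `𝔖_{h+1}`. -/
theorem flipclass_in_Se (n h : ℕ) (u v : Pm n) (F : Set (ℕ → Pm n))
    (hF : IsFlipclass n h u v F) (E : Finset (Fin n))
    (hE : ∀ a : Fin n, a ∈ E ↔ ∃ p ∈ F, ∃ i, i < h ∧ lab p i a ≠ a) :
    (∃ u' v' : Pm E.card, ∃ F' : Set (ℕ → Pm E.card),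
      IsFlipclass E.card h u' v' F' ∧ FlipclassIso n E.card h F F') ∧
    ((∃ Γ ∈ F, IrredPath n h Γ) →
      E.card ≤ h + 1 ∧
      ∃ u' v' : Pm (h + 1), ∃ F' : Set (ℕ → Pm (h + 1)),
        IsFlipclass (h + 1) h u' v' F' ∧ FlipclassIso n (h + 1) h F F') := by
  constructor
  · exact master hF hE E.card (le_refl _)
  · rintro ⟨Γ, hΓ, hirr⟩
    have hcard := card_E_le hF hE hΓ hirr
    exact ⟨hcard, master hF hE (h + 1) hcard⟩
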